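/- arXiv:1108.6180 — 4 statements merged into one kernel-verified Lean document; each statement's English description precedes it below -/
import Mathlib

section
/- Let μ ≤ Q be real numbers and let P, R : ℝ → ℝ be continuous on [μ, Q]. Define a sequence of functions A_n : [μ, Q] → ℝ recursively by A_0(Q') = exp(−∫_μ^{Q'} R(t) dt) and A_{n+1}(Q') = ∫_μ^{Q'} A_n(k) · (R(k) − P(k)) · exp(−∫_k^{Q'} R(t) dt) dk. Then for every n and every Q' ∈ [μ, Q], A_n(Q') = exp(−∫_μ^{Q'} R(t) dt) · (1/n!) · (∫_μ^{Q'} (R(t) − P(t)) dt)^n. -/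
open intervalIntegral Real

/-- The no-emission (atomic, `q = μ`) part of Theorem 1 of the paper: the density
produced by the Sudakov veto algorithm after exactly `n` rejection steps and a final
acceptance step is `Δ_R(μ|Q') Δ^{(n)}_{P-R}(μ|Q')`. -/
theorem veto_algorithm_no_emission_density (μ Q : ℝ) (hμQ : μ ≤ Q) (P R : ℝ → ℝ)
    (hP : ContinuousOn P (Set.Icc μ Q)) (hR : ContinuousOn R (Set.Icc μ Q))
    (A : ℕ → ℝ → ℝ)
    (hA0 : ∀ Q', A 0 Q' = Real.exp (-∫ t in μ..Q', R t))
    (hAsucc : ∀ n Q', A (n + 1) Q' =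
      ∫ k in μ..Q', A n k * (R k - P k) * Real.exp (-∫ t in k..Q', R t)) :
    ∀ n : ℕ, ∀ Q' ∈ Set.Icc μ Q,
      A n Q' = Real.exp (-∫ t in μ..Q', R t) * (1 / (Nat.factorial n) : ℝ) *
        (∫ t in μ..Q', (R t - P t)) ^ n := by
  have hf : ContinuousOn (fun t => R t - P t) (Set.Icc μ Q) := hR.sub hP
  -- integrability of R and f on subintervals
  have hRint : ∀ a ∈ Set.Icc μ Q, ∀ b ∈ Set.Icc μ Q, IntervalIntegrable R MeasureTheory.volume a b := by
    intro a ha b hb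
    refine (hR.mono ?_).intervalIntegrable
    rw [← Set.uIcc_of_le hμQ] at ha hb ⊢
    exact Set.uIcc_subset_uIcc ha hb
  have hfint : ∀ a ∈ Set.Icc μ Q, ∀ b ∈ Set.Icc μ Q, IntervalIntegrable (fun t => R t - P t) MeasureTheory.volume a b := by
    intro a ha b hb
    refine (hf.mono ?_).intervalIntegrable
    rw [← Set.uIcc_of_le hμQ] at ha hb ⊢
    exact Set.uIcc_subset_uIcc ha hb
  set g : ℝ → ℝ := fun x => ∫ t in μ..x, (R t - P t) with hg
  have hμmem : μ ∈ Set.Icc μ Q := ⟨le_refl μ, hμQ⟩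
  intro n
  induction n with
  | zero =>
    intro Q' _
    simp [hA0, Nat.factorial]
  | succ n ih =>
    intro Q' hQ'
    obtain ⟨hμQ', hQ'Q⟩ := hQ'
    -- g is continuous on Icc μ Q'
    have hsub : Set.Icc μ Q' ⊆ Set.Icc μ Q := Set.Icc_subset_Icc le_rfl hQ'Q
    have hgcont : ContinuousOn g (Set.Icc μ Q') := by
      have : Set.Icc μ Q' = Set.uIcc μ Q' := (Set.uIcc_of_le hμQ').symm
      rw [this]
      exact intervalIntegral.continuousOn_primitive_interval
        (((hf.mono (this ▸ hsub)).integrableOn_compact isCompact_uIcc))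
    -- rewrite the integrand
    have key : A (n+1) Q' = ∫ k in μ..Q',
        Real.exp (-∫ t in μ..Q', R t) * ((1 / (Nat.factorial n) : ℝ) * g k ^ n * (R k - P k)) := by
      rw [hAsucc]
      apply intervalIntegral.integral_congr
      intro k hk
      rw [Set.uIcc_of_le hμQ'] at hk
      have hkQ : k ∈ Set.Icc μ Q := hsub hk
      dsimp only
      rw [ih k hkQ]
      have hadd : (∫ t in μ..k, R t) + (∫ t in k..Q', R t) = ∫ t in μ..Q', R t :=
        intervalIntegral.integral_add_adjacent_intervals (hRint μ hμmem k hkQ)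
          (hRint k hkQ Q' ⟨hμQ', hQ'Q⟩)
      rw [← hadd]
      rw [neg_add, Real.exp_add]
      ring
    rw [key, intervalIntegral.integral_const_mul]
    -- FTC for ∫ (1/n!) g^n (R-P)
    have hintg : IntervalIntegrable (fun k => (1 / (Nat.factorial n) : ℝ) * g k ^ n * (R k - P k))
        MeasureTheory.volume μ Q' := by
      apply ContinuousOn.intervalIntegrable
      rw [Set.uIcc_of_le hμQ']
      exact ((continuousOn_const.mul (hgcont.pow n)).mul (hf.mono hsub))
    have hFcont : ContinuousOn (fun x => (1 / (Nat.factorial (n+1)) : ℝ) * g x ^ (n+1))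
        (Set.Icc μ Q') := continuousOn_const.mul (hgcont.pow (n+1))
    have hderiv : ∀ x ∈ Set.Ioo μ Q', HasDerivWithinAt
        (fun x => (1 / (Nat.factorial (n+1)) : ℝ) * g x ^ (n+1))
        ((1 / (Nat.factorial n) : ℝ) * g x ^ n * (R x - P x)) (Set.Ioi x) x := by
      intro x hx
      have hxQ : x ∈ Set.Ioo μ Q := ⟨hx.1, lt_of_lt_of_le hx.2 hQ'Q⟩
      have hfx : ContinuousAt (fun t => R t - P t) x :=
        (hf.mono Set.Ioo_subset_Icc_self).continuousAt (Ioo_mem_nhds hxQ.1 hxQ.2)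
      have hmeas : StronglyMeasurableAtFilter (fun t => R t - P t) (nhds x) :=
        ContinuousOn.stronglyMeasurableAtFilter isOpen_Ioo (hf.mono Set.Ioo_subset_Icc_self) x hxQ
      have hgd : HasDerivAt g (R x - P x) x :=
        intervalIntegral.integral_hasDerivAt_right
          (hfint μ hμmem x (Set.Ioo_subset_Icc_self hxQ)) hmeas hfx
      have : HasDerivAt (fun x => (1 / (Nat.factorial (n+1)) : ℝ) * g x ^ (n+1))
          ((1 / (Nat.factorial (n+1)) : ℝ) * ((n+1 : ℕ) * g x ^ n * (R x - P x))) x :=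
        ((hgd.pow (n+1)).const_mul _)
      refine this.hasDerivWithinAt.congr_deriv ?_
      have hfac : (Nat.factorial (n+1) : ℝ) = (n+1 : ℕ) * Nat.factorial n := by
        push_cast [Nat.factorial_succ]; ring
      rw [hfac]
      have hn0 : (Nat.factorial n : ℝ) ≠ 0 := by positivity
      have hn1 : ((n+1 : ℕ) : ℝ) ≠ 0 := by positivity
      field_simp
    have hFTC := intervalIntegral.integral_eq_sub_of_hasDeriv_right_of_le hμQ' hFcont hderiv hintg
    rw [hFTC]
    have hgμ : g μ = 0 := intervalIntegral.integral_same
    rw [hgμ]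
    simp [hg]
    ring
end

section
/- Let μ ≤ Q be real numbers and let P, R : ℝ → ℝ be continuous on [μ, Q]. Fix q with μ < q. Define a sequence of functions S_n : ℝ → ℝ recursively by S_0(k) = P(q) · exp(−∫_q^k R(t) dt) if q ≤ k and S_0(k) = 0 otherwise, and S_{n+1}(Q') = ∫_μ^{Q'} S_n(k) · (R(k) − P(k)) · exp(−∫_k^{Q'} R(t) dt) dk. Then for every n and every Q' ∈ [q, Q], S_n(Q') = P(q) · exp(−∫_q^{Q'} R(t) dt) · (1/n!) · (∫_q^{Q'} (R(t) − P(t)) dt)^n. -/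
open intervalIntegral Real

/-- The continuous (`q > μ`) part of Theorem 1 of the paper: the density at the
emission scale `q` produced by the Sudakov veto algorithm after exactly `n` rejection
steps and a final acceptance step is `P(q) Δ_R(q|Q') Δ^{(n)}_{P-R}(q|Q')`. -/
theorem veto_algorithm_emission_density (μ Q : ℝ) (hμQ : μ ≤ Q) (P R : ℝ → ℝ)
    (hP : ContinuousOn P (Set.Icc μ Q)) (hR : ContinuousOn R (Set.Icc μ Q))
    (q : ℝ) (hq : μ < q)
    (S : ℕ → ℝ → ℝ)
    (hS0 : ∀ k, S 0 k = if q ≤ k then P q * Real.exp (-∫ t in q..k, R t) else 0)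
    (hSsucc : ∀ n Q', S (n + 1) Q' =
      ∫ k in μ..Q', S n k * (R k - P k) * Real.exp (-∫ t in k..Q', R t)) :
    ∀ n : ℕ, ∀ Q' ∈ Set.Icc q Q,
      S n Q' = P q * Real.exp (-∫ t in q..Q', R t) * (1 / (Nat.factorial n) : ℝ) *
        (∫ t in q..Q', (R t - P t)) ^ n := by
  -- continuous extensions of R and P to all of ℝ
  obtain ⟨Rc, hRcC, hRcEq⟩ : ∃ f : ℝ → ℝ, Continuous f ∧ Set.EqOn f R (Set.Icc μ Q) := by
    refine ⟨Set.IccExtend hμQ (fun x : Set.Icc μ Q => R x),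
      Continuous.Icc_extend' (continuousOn_iff_continuous_restrict.1 hR), fun x hx => ?_⟩
    exact congrArg _ (Set.IccExtend_of_mem hμQ _ hx) |>.trans rfl
  obtain ⟨Pc, hPcC, hPcEq⟩ : ∃ f : ℝ → ℝ, Continuous f ∧ Set.EqOn f P (Set.Icc μ Q) := by
    refine ⟨Set.IccExtend hμQ (fun x : Set.Icc μ Q => P x),
      Continuous.Icc_extend' (continuousOn_iff_continuous_restrict.1 hP), fun x hx => ?_⟩
    exact congrArg _ (Set.IccExtend_of_mem hμQ _ hx) |>.trans rfl
  set F : ℝ → ℝ := fun k => Rc k - Pc k with hF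
  have hFC : Continuous F := hRcC.sub hPcC
  set g : ℝ → ℝ := fun k => ∫ t in q..k, F t with hg
  -- integral congruence lemmas
  have hsub : ∀ a b : ℝ, a ∈ Set.Icc μ Q → b ∈ Set.Icc μ Q →
      Set.uIcc a b ⊆ Set.Icc μ Q := fun a b ha hb => Set.uIcc_subset_Icc ha hb
  have hRcongr : ∀ a b : ℝ, a ∈ Set.Icc μ Q → b ∈ Set.Icc μ Q →
      (∫ t in a..b, R t) = ∫ t in a..b, Rc t := fun a b ha hb =>
    intervalIntegral.integral_congr fun x hx => (hRcEq (hsub a b ha hb hx)).symm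
  have hFcongr : ∀ a b : ℝ, a ∈ Set.Icc μ Q → b ∈ Set.Icc μ Q →
      (∫ t in a..b, (R t - P t)) = g b - g a := by
    intro a b ha hb
    have h1 : (∫ t in a..b, (R t - P t)) = ∫ t in a..b, F t :=
      intervalIntegral.integral_congr fun x hx => by
        have hx' := hsub a b ha hb hx
        simp [hF, hRcEq hx', hPcEq hx']
    rw [h1, hg]
    have := intervalIntegral.integral_add_adjacent_intervals (μ := MeasureTheory.volume)
      (hFC.intervalIntegrable q a) (hFC.intervalIntegrable a b)
    simp only [hg]
    linarith [this]
  -- the primitive g has derivative F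
  have hgderiv : ∀ x : ℝ, HasDerivAt g (F x) x := by
    intro x
    exact intervalIntegral.integral_hasDerivAt_right (hFC.intervalIntegrable q x)
      (hFC.stronglyMeasurableAtFilter MeasureTheory.volume (nhds x)) hFC.continuousAt
  have hgC : Continuous g := by
    refine continuous_iff_continuousAt.2 fun x => (hgderiv x).continuousAt
  -- vanishing below q
  have hzero : ∀ m k, k < q → S m k = 0 := by
    intro m
    induction m with
    | zero => intro k hk; rw [hS0, if_neg (not_le.2 hk)]
    | succ m ih =>
      intro k hk
      rw [hSsucc]
      rw [intervalIntegral.integral_congr (g := fun _ => (0 : ℝ))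
        (fun t ht => by
          have ht' : t < q := lt_of_le_of_lt ht.2 (max_lt hq hk)
          simp [ih t ht'])]
      simp
  have hne : ∀ᵐ x : ℝ, x ≠ q := by
    rw [MeasureTheory.ae_iff]
    have : {x : ℝ | ¬ x ≠ q} = {q} := by ext x; simp
    rw [this]; exact Real.volume_singleton
  -- main induction
  intro n
  induction n with
  | zero =>
    intro Q' hQ'
    rw [hS0, if_pos hQ'.1]
    simp
  | succ n ih =>
    intro Q' hQ'
    obtain ⟨hqQ', hQ'Q⟩ := hQ'
    have hqμQ : q ∈ Set.Icc μ Q := ⟨hq.le, le_trans hqQ' hQ'Q⟩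
    have hQ'μQ : Q' ∈ Set.Icc μ Q := ⟨le_trans hq.le hqQ', hQ'Q⟩
    set h : ℝ → ℝ := fun k => S n k * (R k - P k) * Real.exp (-∫ t in k..Q', R t) with hh
    -- on [μ, q] the integrand vanishes a.e.
    have haeq : ∀ᵐ x : ℝ, x ∈ Set.uIoc μ q → h x = 0 := by
      filter_upwards [hne] with x hx hxI
      rw [Set.uIoc_of_le hq.le] at hxI
      have : x < q := lt_of_le_of_ne hxI.2 hx
      simp [hh, hzero n x this]
    have hint1 : IntervalIntegrable h MeasureTheory.volume μ q := by
      rw [intervalIntegrable_iff]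
      refine (MeasureTheory.integrableOn_zero (s := Set.uIoc μ q)).congr ?_
      exact ((MeasureTheory.ae_restrict_iff' measurableSet_uIoc).2
        (haeq.mono fun x hx hxI => (hx hxI).symm))
    -- continuous representation on [q, Q']
    have hEqOn : ∀ k ∈ Set.uIcc q Q', h k =
        (P q * (1 / (Nat.factorial n) : ℝ) * Real.exp (-∫ t in q..Q', Rc t)) *
          (g k ^ n * F k) := by
      intro k hk
      rw [Set.uIcc_of_le hqQ'] at hk
      have hkμQ : k ∈ Set.Icc μ Q := ⟨le_trans hq.le hk.1, le_trans hk.2 hQ'Q⟩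
      have hik := ih k ⟨hk.1, le_trans hk.2 hQ'Q⟩
      rw [hh]
      simp only [hik, hRcongr q k hqμQ hkμQ, hRcongr k Q' hkμQ hQ'μQ,
        hFcongr q k hqμQ hkμQ]
      have hgq : g q = 0 := by simp [hg]
      have hexp : Real.exp (-∫ t in q..k, Rc t) * Real.exp (-∫ t in k..Q', Rc t) =
          Real.exp (-∫ t in q..Q', Rc t) := by
        rw [← Real.exp_add, ← neg_add,
          intervalIntegral.integral_add_adjacent_intervals
            (hRcC.intervalIntegrable q k) (hRcC.intervalIntegrable k Q')]
      have hRP : R k - P k = F k := by simp [hF, hRcEq hkμQ, hPcEq hkμQ]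
      rw [hRP, hgq, sub_zero]
      calc P q * Real.exp (-∫ t in q..k, Rc t) * (1 / (Nat.factorial n) : ℝ) * g k ^ n
            * F k * Real.exp (-∫ t in k..Q', Rc t)
          = P q * (1 / (Nat.factorial n) : ℝ) *
            (Real.exp (-∫ t in q..k, Rc t) * Real.exp (-∫ t in k..Q', Rc t)) *
            (g k ^ n * F k) := by ring
        _ = _ := by rw [hexp]
    have hint2 : IntervalIntegrable h MeasureTheory.volume q Q' := by
      exact ((continuous_const.mul ((hgC.pow n).mul hFC)).continuousOn.congr
        hEqOn).intervalIntegrable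
    -- FTC for the power integral
    have hkey : (∫ k in q..Q', g k ^ n * F k) = g Q' ^ (n + 1) / (n + 1) := by
      have hd : ∀ x ∈ Set.uIcc q Q',
          HasDerivAt (fun u => g u ^ (n + 1) / (n + 1)) (g x ^ n * F x) x := by
        intro x _
        have := ((hgderiv x).pow (n + 1)).div_const ((n : ℝ) + 1)
        refine this.congr_deriv ?_
        have hn1 : ((n : ℝ) + 1) ≠ 0 := by positivity
        simp only [Nat.add_sub_cancel, Nat.cast_add, Nat.cast_one] at this ⊢
        rw [mul_assoc, mul_div_cancel_left₀ _ hn1]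
      rw [intervalIntegral.integral_eq_sub_of_hasDerivAt hd
        (((hgC.pow n).mul hFC).intervalIntegrable q Q')]
      have hgq : g q = 0 := by simp [hg]
      rw [hgq]
      simp
    -- put everything together
    rw [hSsucc]
    have hsplit : (∫ k in μ..Q', h k) = (∫ k in μ..q, h k) + ∫ k in q..Q', h k :=
      (intervalIntegral.integral_add_adjacent_intervals hint1 hint2).symm
    have hfirst : (∫ k in μ..q, h k) = 0 := intervalIntegral.integral_zero_ae haeq
    have hsecond : (∫ k in q..Q', h k) =
        (P q * (1 / (Nat.factorial n) : ℝ) * Real.exp (-∫ t in q..Q', Rc t)) *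
          (g Q' ^ (n + 1) / (n + 1)) := by
      rw [intervalIntegral.integral_congr hEqOn, intervalIntegral.integral_const_mul, hkey]
    show (∫ k in μ..Q', h k) = _
    rw [hsplit, hfirst, hsecond, zero_add]
    rw [hRcongr q Q' hqμQ hQ'μQ, hFcongr q Q' hqμQ hQ'μQ]
    have hgq : g q = 0 := by simp [hg]
    rw [hgq, sub_zero, Nat.factorial_succ]
    have hfac : (Nat.factorial n : ℝ) ≠ 0 := Nat.cast_ne_zero.2 (Nat.factorial_ne_zero n)
    have hn1 : ((n : ℝ) + 1) ≠ 0 := by positivity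
    push_cast
    field_simp
    try simp
end

section
/- Let μ < Q be real numbers and let P, R : ℝ → ℝ be continuous on [μ, Q] with 0 ≤ P(t) ≤ R(t) for all t ∈ [μ, Q]. For each n ∈ ℕ define the measure ν_n on ℝ as the sum of the point mass at μ with weight exp(−∫_μ^Q R) · (1/n!) · (∫_μ^Q (R − P))^n and the measure with density q ↦ P(q) · exp(−∫_q^Q R) · (1/n!) · (∫_q^Q (R − P))^n with respect to Lebesgue measure restricted to the interval (μ, Q]. Then the countable sum of measures ∑_{n∈ℕ} ν_n equals the measure given by the point mass at μ with weight exp(−∫_μ^Q P) plus the measure with density q ↦ P(q) · exp(−∫_q^Q P) with respect to Lebesgue measure restricted to (μ, Q]. -/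
open intervalIntegral Real MeasureTheory

lemma veto_tsum_exp (a x : ℝ) (ha : 0 ≤ a) (hx : 0 ≤ x) :
    ∑' n : ℕ, ENNReal.ofReal (a * (1 / (Nat.factorial n) : ℝ) * x ^ n)
      = ENNReal.ofReal (a * Real.exp x) := by
  have hsum : Summable (fun n : ℕ => a * (1 / (Nat.factorial n) : ℝ) * x ^ n) :=
    ((Real.summable_pow_div_factorial x).mul_left a).congr fun n => by ring
  have hnn : ∀ n : ℕ, 0 ≤ a * (1 / (Nat.factorial n) : ℝ) * x ^ n := fun n => by positivity
  rw [← ENNReal.ofReal_tsum_of_nonneg hnn hsum]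
  congr 1
  have hexp : Real.exp x = ∑' n : ℕ, x ^ n / (Nat.factorial n) := by
    rw [Real.exp_eq_exp_ℝ, NormedSpace.exp_eq_tsum_div]
  rw [hexp, ← tsum_mul_left]
  exact tsum_congr fun n => by ring

/-- Overall correctness of the Sudakov veto algorithm: the sum over the number `n` of
rejection steps of the laws `dS_veto^(n)(μ, q|Q)` equals the target Sudakov law
`dS_P(μ, q|Q) = Δ_P(μ|Q) δ(q-μ) + θ(Q-q)θ(q-μ) P(q) Δ_P(q|Q) dq`. -/
theorem veto_algorithm_law (μ Q : ℝ) (hμQ : μ < Q) (P R : ℝ → ℝ)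
    (hP : ContinuousOn P (Set.Icc μ Q)) (hR : ContinuousOn R (Set.Icc μ Q))
    (hPR : ∀ t ∈ Set.Icc μ Q, 0 ≤ P t ∧ P t ≤ R t)
    (ν : ℕ → Measure ℝ)
    (hν : ∀ n : ℕ, ν n =
      (ENNReal.ofReal (Real.exp (-∫ t in μ..Q, R t) * (1 / (Nat.factorial n) : ℝ) *
          (∫ t in μ..Q, (R t - P t)) ^ n)) • Measure.dirac μ +
        (volume.restrict (Set.Ioc μ Q)).withDensity
          (fun q => ENNReal.ofReal
            (P q * Real.exp (-∫ t in q..Q, R t) * (1 / (Nat.factorial n) : ℝ) *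
              (∫ t in q..Q, (R t - P t)) ^ n))) :
    Measure.sum ν =
      (ENNReal.ofReal (Real.exp (-∫ t in μ..Q, P t))) • Measure.dirac μ +
        (volume.restrict (Set.Ioc μ Q)).withDensity
          (fun q => ENNReal.ofReal (P q * Real.exp (-∫ t in q..Q, P t))) := by
  have hle : μ ≤ Q := hμQ.le
  have hIcc : Set.uIcc μ Q = Set.Icc μ Q := Set.uIcc_of_le hle
  have hRint : IntegrableOn R (Set.Icc μ Q) := hR.integrableOn_Icc
  have hPint : IntegrableOn P (Set.Icc μ Q) := hP.integrableOn_Icc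
  -- interval integrability for q ∈ Icc μ Q
  have hsub : ∀ q ∈ Set.Icc μ Q, Set.Icc q Q ⊆ Set.Icc μ Q := fun q hq =>
    Set.Icc_subset_Icc hq.1 le_rfl
  have hRii : ∀ q ∈ Set.Icc μ Q, IntervalIntegrable R volume q Q := fun q hq =>
    (hR.mono (hsub q hq)).intervalIntegrable_of_Icc hq.2
  have hPii : ∀ q ∈ Set.Icc μ Q, IntervalIntegrable P volume q Q := fun q hq =>
    (hP.mono (hsub q hq)).intervalIntegrable_of_Icc hq.2
  -- key integral facts
  have hXeq : ∀ q ∈ Set.Icc μ Q,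
      (∫ t in q..Q, (R t - P t)) = (∫ t in q..Q, R t) - ∫ t in q..Q, P t := fun q hq =>
    integral_sub (hRii q hq) (hPii q hq)
  have hXnn : ∀ q ∈ Set.Icc μ Q, 0 ≤ ∫ t in q..Q, (R t - P t) := by
    intro q hq
    refine integral_nonneg hq.2 fun t ht => ?_
    have h := hPR t (hsub q hq ht)
    linarith [h.1, h.2]
  -- the key tsum identity
  have key : ∀ q ∈ Set.Icc μ Q, ∀ c : ℝ, 0 ≤ c →
      ∑' n : ℕ, ENNReal.ofReal (c * Real.exp (-∫ t in q..Q, R t) *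
          (1 / (Nat.factorial n) : ℝ) * (∫ t in q..Q, (R t - P t)) ^ n)
        = ENNReal.ofReal (c * Real.exp (-∫ t in q..Q, P t)) := by
    intro q hq c hc
    have ha : 0 ≤ c * Real.exp (-∫ t in q..Q, R t) := by positivity
    rw [veto_tsum_exp _ _ ha (hXnn q hq)]
    congr 1
    rw [hXeq q hq, mul_assoc, ← Real.exp_add]
    ring_nf
  -- measurability ingredients
  have hIRcont : ContinuousOn (fun q => ∫ t in q..Q, R t) (Set.Icc μ Q) := by
    rw [← hIcc]; exact continuousOn_primitive_interval_left (hIcc ▸ hRint)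
  have hXcont : ContinuousOn (fun q => ∫ t in q..Q, (R t - P t)) (Set.Icc μ Q) := by
    rw [← hIcc]
    exact continuousOn_primitive_interval_left (hIcc ▸ (hRint.sub hPint))
  have hfmeas : ∀ n : ℕ, AEMeasurable (fun q => ENNReal.ofReal
      (P q * Real.exp (-∫ t in q..Q, R t) * (1 / (Nat.factorial n) : ℝ) *
        (∫ t in q..Q, (R t - P t)) ^ n)) (volume.restrict (Set.Ioc μ Q)) := by
    intro n
    have hc : ContinuousOn (fun q => ENNReal.ofReal
        (P q * Real.exp (-∫ t in q..Q, R t) * (1 / (Nat.factorial n) : ℝ) *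
          (∫ t in q..Q, (R t - P t)) ^ n)) (Set.Icc μ Q) := by
      apply ENNReal.continuous_ofReal.comp_continuousOn
      exact (((hP.mul (Real.continuous_exp.comp_continuousOn hIRcont.neg)).mul
        continuousOn_const).mul (hXcont.pow n))
    exact (hc.aemeasurable measurableSet_Icc).mono_measure
      (Measure.restrict_mono Set.Ioc_subset_Icc_self le_rfl)
  -- now prove measure equality
  ext s hs
  rw [Measure.sum_apply _ hs]
  simp only [hν, Measure.add_apply, Measure.smul_apply, smul_eq_mul,
    withDensity_apply _ hs, Measure.dirac_apply' _ hs]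
  rw [ENNReal.tsum_add, ENNReal.tsum_mul_right]
  congr 1
  · -- dirac part
    congr 1
    have := key μ (Set.left_mem_Icc.2 hle) 1 zero_le_one
    simpa using this
  · -- density part
    rw [← lintegral_tsum (fun n => ((hfmeas n).mono_measure Measure.restrict_le_self))]
    refine lintegral_congr_ae ?_
    have hae : ∀ᵐ q ∂(volume.restrict (Set.Ioc μ Q)),
        (∑' n : ℕ, ENNReal.ofReal (P q * Real.exp (-∫ t in q..Q, R t) *
            (1 / (Nat.factorial n) : ℝ) * (∫ t in q..Q, (R t - P t)) ^ n))
          = ENNReal.ofReal (P q * Real.exp (-∫ t in q..Q, P t)) := by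
      rw [ae_restrict_iff' measurableSet_Ioc]
      refine Filter.Eventually.of_forall fun q hq => ?_
      have hq' : q ∈ Set.Icc μ Q := Set.Ioc_subset_Icc_self hq
      exact key q hq' (P q) (hPR q hq').1
    exact ae_restrict_of_ae hae
end

section
/- Let μ ≤ q ≤ Q be real numbers, and for i = 1, …, n let P_i : ℝ → ℝ be continuous on [μ, Q]. Set P(t) = ∑_i P_i(t), P⁺(t) = ∑_i max(P_i(t), 0), and P⁻(t) = ∑_i max(−P_i(t), 0). Then the series over m ∈ ℕ of (P⁺(q) − P⁻(q)) · exp(−∫_q^Q P⁺(t) dt) · (1/m!) · (∫_q^Q P⁻(t) dt)^m converges, with sum equal to P(q) · exp(−∫_q^Q P(t) dt). -/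
open intervalIntegral Real

theorem ivc_pointwise (a : ℝ) : max a 0 - max (-a) 0 = a := by
  rcases le_total a 0 with h | h
  · rw [max_eq_right h, max_eq_left (by linarith)]; ring
  · rw [max_eq_left h, max_eq_right (by linarith)]; ring

/-- Correctness of the interleaved veto/competition algorithm: summing the emission
density at `q` after exactly `m` rejection steps (with overestimate `P⁺ = ∑ i, P i⁺`
and veto weight `P⁻ = ∑ i, P i⁻`) over `m` yields the target density
`P(q) Δ_P(q|Q)` with `P = ∑ i, P i`. -/
theorem interleaved_veto_competition (μ q Q : ℝ) (hμq : μ ≤ q) (hqQ : q ≤ Q)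
    (n : ℕ) (P : Fin n → ℝ → ℝ) (hP : ∀ i, ContinuousOn (P i) (Set.Icc μ Q)) :
    HasSum
      (fun m : ℕ =>
        ((∑ i, max (P i q) 0) - ∑ i, max (-P i q) 0) *
          Real.exp (-∫ t in q..Q, ∑ i, max (P i t) 0) *
          (1 / (Nat.factorial m) : ℝ) * (∫ t in q..Q, ∑ i, max (-P i t) 0) ^ m)
      ((∑ i, P i q) * Real.exp (-∫ t in q..Q, ∑ i, P i t)) := by
  set x : ℝ := ∫ t in q..Q, ∑ i, max (-P i t) 0 with hx
  set A : ℝ := ∫ t in q..Q, ∑ i, max (P i t) 0 with hA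
  have hsub : Set.uIcc q Q ⊆ Set.Icc μ Q := by
    rw [Set.uIcc_of_le hqQ]
    exact Set.Icc_subset_Icc hμq le_rfl
  have hint_p : IntervalIntegrable (fun t => ∑ i, max (P i t) 0) MeasureTheory.volume q Q := by
    apply ContinuousOn.intervalIntegrable
    exact continuousOn_finset_sum _ (fun i _ =>
      ((hP i).mono hsub).sup continuousOn_const)
  have hint_m : IntervalIntegrable (fun t => ∑ i, max (-P i t) 0) MeasureTheory.volume q Q := by
    apply ContinuousOn.intervalIntegrable
    exact continuousOn_finset_sum _ (fun i _ =>
      (((hP i).mono hsub).neg.sup continuousOn_const))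
  have hpt : ∀ t, (∑ i, max (P i t) 0) - ∑ i, max (-P i t) 0 = ∑ i, P i t := by
    intro t
    rw [← Finset.sum_sub_distrib]
    exact Finset.sum_congr rfl fun i _ => ivc_pointwise (P i t)
  have hexp : Real.exp (-A) * Real.exp x = Real.exp (-∫ t in q..Q, ∑ i, P i t) := by
    rw [← Real.exp_add]
    congr 1
    have h1 : -A + x = -(A - x) := by ring
    rw [h1, hA, hx, ← intervalIntegral.integral_sub hint_p hint_m]
    congr 1
    exact intervalIntegral.integral_congr fun t _ => hpt t
  have hs : HasSum (fun m : ℕ => x ^ m / (Nat.factorial m : ℝ)) (Real.exp x) := by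
    rw [Real.exp_eq_exp_ℝ]
    exact NormedSpace.expSeries_div_hasSum_exp x
  have key := hs.mul_left ((∑ i, P i q) * Real.exp (-A))
  convert key using 1
  · rfl
  · funext m
    rw [hpt q]
    field_simp
  · rw [mul_assoc, hexp]
end
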